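/- If C is a Z4-linear code of length r+s that is closed under the simultaneous cyclic shift on the first r coordinates and the last s coordinates, then its dual code C⊥ (with respect to the standard inner product on Z4^(r+s)) is also closed under this simultaneous cyclic shift. -/

import Mathlib

open Polynomial

abbrev Z4 := ZMod 4

abbrev Rq (n : ℕ) := Polynomial Z4 ⧸ Ideal.span ({(X : Polynomial Z4) ^ n - 1} : Set (Polynomial Z4))

noncomputable def mkQ (n : ℕ) (p : Polynomial Z4) : Rq n := Ideal.Quotient.mk _ p

noncomputable def toPoly {n : ℕ} (c : Fin n → Z4) : Polynomial Z4 :=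
  ∑ i, Polynomial.C (c i) * X ^ (i : ℕ)

noncomputable def tau {r s : ℕ} (c : (Fin r → Z4) × (Fin s → Z4)) : Rq r × Rq s :=
  (mkQ r (toPoly c.1), mkQ s (toPoly c.2))

def shiftT {r s : ℕ} (c : (Fin r → Z4) × (Fin s → Z4)) : (Fin r → Z4) × (Fin s → Z4) :=
  (fun i => c.1 ((finRotate r).symm i), fun j => c.2 ((finRotate s).symm j))

def innerProd {r s : ℕ} (c c' : (Fin r → Z4) × (Fin s → Z4)) : Z4 :=
  ∑ i, c.1 i * c'.1 i + ∑ j, c.2 j * c'.2 j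

/-- the dual of a double cyclic code over `Z4` is again closed under the
simultaneous cyclic shift. -/
theorem stmt_0 (r s : ℕ)
    (C : Submodule Z4 ((Fin r → Z4) × (Fin s → Z4)))
    (hC : ∀ c ∈ C, shiftT c ∈ C) :
    ∀ c' : (Fin r → Z4) × (Fin s → Z4),
      (∀ c ∈ C, innerProd c c' = 0) → (∀ c ∈ C, innerProd c (shiftT c') = 0) := by
  intro c' hdual c hc
  -- shiftT is injective
  have hinj : Function.Injective (shiftT (r := r) (s := s)) := by
    intro a b h
    have h1 := congrArg Prod.fst h
    have h2 := congrArg Prod.snd h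
    ext i
    · have := congrFun h1 (finRotate r i)
      simpa only [shiftT, Equiv.symm_apply_apply] using this
    · have := congrFun h2 (finRotate s i)
      simpa only [shiftT, Equiv.symm_apply_apply] using this
  -- shiftT restricted to C is surjective, since C is finite
  have hsurj : ∀ x ∈ C, ∃ y ∈ C, shiftT y = x := by
    let f : C → C := fun x => ⟨shiftT x.1, hC x.1 x.2⟩
    have hfinj : Function.Injective f := by
      intro a b h
      exact Subtype.ext (hinj (congrArg Subtype.val h))
    have hfsurj : Function.Surjective f := Finite.surjective_of_injective hfinj
    intro x hx
    obtain ⟨y, hy⟩ := hfsurj ⟨x, hx⟩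
    exact ⟨y.1, y.2, congrArg Subtype.val hy⟩
  obtain ⟨d, hd, hds⟩ := hsurj c hc
  -- innerProd (shiftT a) (shiftT b) = innerProd a b
  have key : innerProd (shiftT d) (shiftT c') = innerProd d c' := by
    unfold innerProd shiftT
    congr 1
    · exact Equiv.sum_comp (finRotate r).symm fun i => d.1 i * c'.1 i
    · exact Equiv.sum_comp (finRotate s).symm fun j => d.2 j * c'.2 j
  rw [← hds, key]
  exact hdual d hd
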